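/- Let G be a U_π-group (unique m-th roots property: x^m = y^m ⟹ x = y for m ∈ π′) which is metabelian with maximal abelian normal subgroup A ⊇ G', and suppose G/A is π′-torsion-free. Let N be a normal subgroup with A ≤ N ⊴ G and Z = Z(N) ≠ 1. Then the quotient G/Z is again a U_π-group. -/

import Mathlib

open scoped commutatorElement

/-- Let `G` be a metabelian `U_π`-group with `A` maximal abelian normal containing `G'`,
`G/A` being `π'`-torsion-free. If `A ≤ N ⊴ G` and `Z = Z(N)` is nontrivial, then `G/Z` is
again a `U_π`-group: `x^m Z = y^m Z` with `m ∈ π'` implies `x Z = y Z`. -/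
theorem stmt4 {G : Type*} [Group G] (π : Set ℕ)
    (hU : ∀ m : ℕ, 0 < m → (∀ p : ℕ, p.Prime → p ∣ m → p ∉ π) →
      Function.Injective (fun x : G => x ^ m))
    (A : Subgroup G) [A.Normal] (hA : IsMulCommutative A) (hGA : commutator G ≤ A)
    (hmax : ∀ B : Subgroup G, B.Normal → IsMulCommutative B → commutator G ≤ B →
      A ≤ B → B = A)
    (hGAtf : ∀ x : G, ∀ m : ℕ, 0 < m → (∀ p : ℕ, p.Prime → p ∣ m → p ∉ π) →
      x ^ m ∈ A → x ∈ A)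
    (N : Subgroup G) [N.Normal] (hAN : A ≤ N)
    (Z : Subgroup G) (hZ : Z = N ⊓ Subgroup.centralizer (N : Set G))
    (hZne : Z ≠ ⊥)
    (x y : G) (m : ℕ) (hm : 0 < m) (hmπ : ∀ p : ℕ, p.Prime → p ∣ m → p ∉ π)
    (hxy : (x ^ m)⁻¹ * y ^ m ∈ Z) : x⁻¹ * y ∈ Z := by
  haveI := hA
  have hAcomm : ∀ p q : G, p ∈ A → q ∈ A → p * q = q * p := fun p q hp hq =>
    Subgroup.mul_comm_of_mem_isMulCommutative A hp hq
  set z : G := (x ^ m)⁻¹ * y ^ m with hzdef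
  rw [hZ] at hxy
  have hzN : z ∈ N := hxy.1
  have hzC : ∀ g ∈ N, g * z = z * g := Subgroup.mem_centralizer_iff.mp hxy.2
  -- Step 1: the centralizer of A is contained in A (by maximality of A)
  have hCA : ∀ c : G, (∀ a ∈ A, a * c = c * a) → c ∈ A := by
    intro c hc
    set B := Subgroup.zpowers c ⊔ A with hB
    have hAB : A ≤ B := le_sup_right
    have hmem : ∀ b ∈ B, ∃ k : ℤ, ∃ a ∈ A, b = c ^ k * a := by
      intro b hb
      have hb' : b ∈ (↑(Subgroup.zpowers c ⊔ A) : Set G) := hb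
      rw [Subgroup.mul_normal] at hb'
      obtain ⟨u, hu, a, ha, rfl⟩ := hb'
      obtain ⟨k, rfl⟩ := Subgroup.mem_zpowers_iff.mp hu
      exact ⟨k, a, ha, rfl⟩
    have hccomm : ∀ a ∈ A, ∀ k : ℤ, a * c ^ k = c ^ k * a := fun a ha k =>
      (Commute.zpow_right (hc a ha) k)
    have hgcA : ∀ g : G, ⁅g, c⁆ ∈ A := fun g =>
      hGA (Subgroup.commutator_mem_commutator (Subgroup.mem_top g) (Subgroup.mem_top c))
    have hBnormal : B.Normal := by
      constructor
      intro b hb g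
      obtain ⟨k, a, ha, rfl⟩ := hmem b hb
      have h1 : g * (c ^ k * a) * g⁻¹ = (g * c * g⁻¹) ^ k * (g * a * g⁻¹) := by
        rw [conj_zpow]; group
      have h2 : g * c * g⁻¹ = ⁅g, c⁆ * c := by group
      have hcomm2 : Commute ⁅g, c⁆ c := hc _ (hgcA g)
      have h3 : (g * c * g⁻¹) ^ k = ⁅g, c⁆ ^ k * c ^ k := by
        rw [h2, hcomm2.mul_zpow]
      rw [h1, h3]
      have hA1 : ⁅g, c⁆ ^ k ∈ A := Subgroup.zpow_mem A (hgcA g) k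
      have hA2 : g * a * g⁻¹ ∈ A := Subgroup.Normal.conj_mem ‹A.Normal› a ha g
      exact Subgroup.mul_mem B
        (Subgroup.mul_mem B (hAB hA1)
          (Subgroup.mem_sup_left (Subgroup.zpow_mem _ (Subgroup.mem_zpowers c) k)))
        (hAB hA2)
    have hBcomm : IsMulCommutative B := by
      constructor; constructor
      rintro ⟨b1, hb1⟩ ⟨b2, hb2⟩
      ext
      obtain ⟨k1, a1, ha1, rfl⟩ := hmem b1 hb1
      obtain ⟨k2, a2, ha2, rfl⟩ := hmem b2 hb2
      show (c ^ k1 * a1) * (c ^ k2 * a2) = (c ^ k2 * a2) * (c ^ k1 * a1)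
      have e1 : a1 * c ^ k2 = c ^ k2 * a1 := hccomm a1 ha1 k2
      have e2 : a2 * c ^ k1 = c ^ k1 * a2 := hccomm a2 ha2 k1
      have e3 : a1 * a2 = a2 * a1 := hAcomm _ _ ha1 ha2
      have e4 : c ^ k1 * c ^ k2 = c ^ k2 * c ^ k1 := (Commute.zpow_zpow_self c k1 k2)
      calc c ^ k1 * a1 * (c ^ k2 * a2) = c ^ k1 * (a1 * c ^ k2) * a2 := by group
        _ = c ^ k1 * (c ^ k2 * a1) * a2 := by rw [e1]
        _ = (c ^ k1 * c ^ k2) * (a1 * a2) := by group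
        _ = (c ^ k2 * c ^ k1) * (a2 * a1) := by rw [e3, e4]
        _ = c ^ k2 * (a2 * c ^ k1) * a1 := by rw [e2]; group
        _ = c ^ k2 * a2 * (c ^ k1 * a1) := by group
    have hBA := hmax B hBnormal hBcomm (le_trans hGA hAB) hAB
    exact hBA ▸ (Subgroup.mem_sup_left (Subgroup.mem_zpowers c) : c ∈ B)
  have hzA : z ∈ A := hCA z (fun a ha => hzC a (hAN ha))
  -- Step 2: a := x⁻¹ * y ∈ A
  set a : G := x⁻¹ * y with hadef
  have hcommQ : ∀ u v : G, Commute ((u : G ⧸ A)) ((v : G ⧸ A)) := by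
    intro u v
    rw [Commute, SemiconjBy, ← QuotientGroup.mk_mul, ← QuotientGroup.mk_mul,
      QuotientGroup.eq]
    have h : (u * v)⁻¹ * (v * u) = ⁅v⁻¹, u⁻¹⁆ := by group
    rw [h]
    exact hGA (Subgroup.commutator_mem_commutator (Subgroup.mem_top _) (Subgroup.mem_top _))
  have haA : a ∈ A := by
    apply hGAtf _ m hm hmπ
    rw [← QuotientGroup.eq_one_iff]
    have hq : ((a ^ m : G) : G ⧸ A) = ((z : G) : G ⧸ A) := by
      rw [hadef, hzdef, QuotientGroup.mk_pow, QuotientGroup.mk_mul,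
        QuotientGroup.mk_mul, QuotientGroup.mk_inv, QuotientGroup.mk_inv,
        QuotientGroup.mk_pow, QuotientGroup.mk_pow,
        ((hcommQ x y).inv_left).mul_pow, inv_pow]
    rw [hq, QuotientGroup.eq_one_iff]
    exact hzA
  -- Step 3: key induction: the "m-fold twisted product" map depends only on x mod A
  have key : ∀ (u v : G), (∀ c ∈ A, u⁻¹ * c * u = v⁻¹ * c * v) →
      ∀ k : ℕ, ∀ b ∈ A,
        ((u ^ k)⁻¹ * (u * b) ^ k ∈ A) ∧
        ((u ^ k)⁻¹ * (u * b) ^ k = (v ^ k)⁻¹ * (v * b) ^ k) := by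
    intro u v huv k
    induction k with
    | zero => intro b hb; refine ⟨by simpa using one_mem A, by simp⟩
    | succ k ih =>
      intro b hb
      obtain ⟨hmemk, heqk⟩ := ih b hb
      have e1 : (u ^ (k+1))⁻¹ * (u * b) ^ (k+1)
          = u⁻¹ * ((u ^ k)⁻¹ * (u * b) ^ k) * u * b := by
        rw [pow_succ, pow_succ]; group
      have e2 : (v ^ (k+1))⁻¹ * (v * b) ^ (k+1)
          = v⁻¹ * ((v ^ k)⁻¹ * (v * b) ^ k) * v * b := by
        rw [pow_succ, pow_succ]; group
      constructor
      · rw [e1]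
        have : u⁻¹ * ((u ^ k)⁻¹ * (u * b) ^ k) * u ∈ A := by
          have := Subgroup.Normal.conj_mem ‹A.Normal› _ hmemk u⁻¹
          simpa using this
        exact Subgroup.mul_mem A this hb
      · rw [e1, e2, ← heqk, huv _ hmemk]
  -- Step 4: a centralizes N
  have hcent : ∀ n ∈ N, n * a = a * n := by
    intro n hn
    have hd : x⁻¹ * (n⁻¹ * x * n) ∈ A := by
      have h : x⁻¹ * (n⁻¹ * x * n) = ⁅x⁻¹, n⁻¹⁆ := by group
      rw [h]
      exact hGA (Subgroup.commutator_mem_commutator (Subgroup.mem_top _) (Subgroup.mem_top _))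
    have huv : ∀ c ∈ A, x⁻¹ * c * x = (n⁻¹ * x * n)⁻¹ * c * (n⁻¹ * x * n) := by
      intro c hc
      set d : G := x⁻¹ * (n⁻¹ * x * n) with hddef
      have hx : n⁻¹ * x * n = x * d := by rw [hddef]; group
      have hcx : x⁻¹ * c * x ∈ A := by
        have := Subgroup.Normal.conj_mem ‹A.Normal› _ hc x⁻¹
        simpa using this
      have hcomm := hAcomm _ _ hcx hd
      rw [hx]
      calc x⁻¹ * c * x = d⁻¹ * (d * (x⁻¹ * c * x)) := by group
        _ = d⁻¹ * ((x⁻¹ * c * x) * d) := by rw [hAcomm _ _ hd hcx]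
        _ = (x * d)⁻¹ * c * (x * d) := by group
    have ha' : n⁻¹ * a * n ∈ A := by
      have := Subgroup.Normal.conj_mem ‹A.Normal› _ haA n⁻¹
      simpa using this
    obtain ⟨_, heq⟩ := key x (n⁻¹ * x * n) huv m (n⁻¹ * a * n) ha'
    -- RHS equals z
    have hy : y = x * a := by rw [hadef]; group
    have hz' : (x ^ m)⁻¹ * (x * a) ^ m = z := by rw [hzdef, hy]
    have hconj : ((n⁻¹ * x * n) ^ m)⁻¹ * ((n⁻¹ * x * n) * (n⁻¹ * a * n)) ^ m
        = n⁻¹ * ((x ^ m)⁻¹ * (x * a) ^ m) * n := by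
      have h1 : (n⁻¹ * x * n) ^ m = n⁻¹ * x ^ m * n := by
        have := conj_pow (i := m) (a := n⁻¹) (b := x)
        simpa using this
      have h2 : ((n⁻¹ * x * n) * (n⁻¹ * a * n)) ^ m = n⁻¹ * (x * a) ^ m * n := by
        have h3 : (n⁻¹ * x * n) * (n⁻¹ * a * n) = n⁻¹ * (x * a) * n := by group
        rw [h3]
        have := conj_pow (i := m) (a := n⁻¹) (b := x * a)
        simpa using this
      rw [h1, h2]; group
    have hzn : n⁻¹ * z * n = z := by
      have := hzC n hn
      calc n⁻¹ * z * n = n⁻¹ * (z * n) := by group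
        _ = n⁻¹ * (n * z) := by rw [← this]
        _ = z := by group
    have hfinal : (x ^ m)⁻¹ * (x * (n⁻¹ * a * n)) ^ m = (x ^ m)⁻¹ * (x * a) ^ m := by
      rw [heq, hconj, hz', hzn, ← hz']
    have hpow : (x * (n⁻¹ * a * n)) ^ m = (x * a) ^ m := mul_left_cancel hfinal
    have hxa : x * (n⁻¹ * a * n) = x * a := hU m hm hmπ hpow
    have haa : n⁻¹ * a * n = a := mul_left_cancel hxa
    have hend : a * n = n * (n⁻¹ * a * n) := by group
    rw [haa] at hend
    exact hend.symm
  rw [hZ]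
  exact Subgroup.mem_inf.mpr ⟨hAN haA, Subgroup.mem_centralizer_iff.mpr hcent⟩
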